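/- Let H_C be n-dimensional with orthonormal basis {|i⟩}, H finite-dimensional, and for each i let {E_{i,δ} : δ ∈ Δ_i} be Kraus operators on H with ∑_δ E_{i,δ}† E_{i,δ} = I_H. Let F be their guarded composition along {|i⟩}. Then for every unit vector |φ⟩ = ∑_i α_i|i⟩ in H_C and unit vector |ψ⟩ in H: tr_{H_C}( ∑_{(δ_1,...,δ_n)} F(δ_1,...,δ_n)(|φ⟩⊗|ψ⟩)(⟨φ|⊗⟨ψ|)F(δ_1,...,δ_n)† ) = ∑_{i=1}^n |α_i|² · ∑_{δ∈Δ_i} E_{i,δ}|ψ⟩⟨ψ|E_{i,δ}†. -/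

import Mathlib

noncomputable section
open scoped InnerProductSpace
open Finset

/-- Coordinate model of the tensor product `H_C ⊗ H` along a fixed orthonormal
basis of the `n`-dimensional coin space `H_C`. -/
abbrev TensorSp (n : ℕ) (H : Type*) [NormedAddCommGroup H] [InnerProductSpace ℂ H] : Type _ :=
  PiLp 2 (fun _ : Fin n => H)

variable {n : ℕ} {H : Type*} [NormedAddCommGroup H] [InnerProductSpace ℂ H]

/-- the pure tensor `c ⊗ ψ`. -/
def pureTensor (c : EuclideanSpace ℂ (Fin n)) (ψ : H) : TensorSp n H :=
  WithLp.toLp 2 (fun i => c i • ψ)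

/-- the block-diagonal operator `∑ᵢ |i⟩⟨i| ⊗ Uᵢ`, i.e. the guarded composition of
the `Uᵢ` along the computational basis of the coin space. -/
def blockDiag (U : Fin n → (H →ₗ[ℂ] H)) : TensorSp n H →ₗ[ℂ] TensorSp n H where
  toFun x := WithLp.toLp 2 (fun i => U i (x i))
  map_add' x y := by ext i; simp [map_add]
  map_smul' c x := by ext i; simp [map_smul]

/-- `A ⊗ B` in the coordinate model, `A` acting on the coin space. -/
def tensorOp (A : EuclideanSpace ℂ (Fin n) →ₗ[ℂ] EuclideanSpace ℂ (Fin n))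
    (B : H →ₗ[ℂ] H) : TensorSp n H →ₗ[ℂ] TensorSp n H where
  toFun x := WithLp.toLp 2 (fun i => ∑ b : Fin n, A (EuclideanSpace.single b 1) i • B (x b))
  map_add' x y := by
    ext i; simp [map_add, smul_add, Finset.sum_add_distrib]
  map_smul' c x := by
    ext i; simp [map_smul, Finset.smul_sum, smul_comm c]

/-- `A ⊗ I_H`. -/
def tensorLeft (A : EuclideanSpace ℂ (Fin n) →ₗ[ℂ] EuclideanSpace ℂ (Fin n)) :
    TensorSp n H →ₗ[ℂ] TensorSp n H :=
  tensorOp A LinearMap.id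

/-- A linear operator is unitary iff it preserves inner products and is bijective. -/
def IsUnitaryOp {E : Type*} [NormedAddCommGroup E] [InnerProductSpace ℂ E]
    (A : E →ₗ[ℂ] E) : Prop :=
  (∀ x y : E, ⟪A x, A y⟫_ℂ = ⟪x, y⟫_ℂ) ∧ Function.Bijective A

/-- Positive (semidefinite) operator. -/
def IsPosOp {E : Type*} [NormedAddCommGroup E] [InnerProductSpace ℂ E]
    (A : E →ₗ[ℂ] E) : Prop :=
  ∀ x : E, (⟪x, A x⟫_ℂ).im = 0 ∧ 0 ≤ (⟪x, A x⟫_ℂ).re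

/-- Löwner order `A ⊑ B`. -/
def Loewner {E : Type*} [NormedAddCommGroup E] [InnerProductSpace ℂ E]
    (A B : E →ₗ[ℂ] E) : Prop :=
  IsPosOp (B - A)

section guarded
variable [FiniteDimensional ℂ H] {Δ : Fin n → Type*} [∀ k, Fintype (Δ k)]

/-- the coefficients `λ_{kδ}`. -/
def lam (F : ∀ k, Δ k → (H →ₗ[ℂ] H)) (k : Fin n) (δ : Δ k) : ℝ :=
  Real.sqrt ((LinearMap.trace ℂ H (LinearMap.adjoint (F k δ) ∘ₗ F k δ)).re /
    ∑ τ : Δ k, (LinearMap.trace ℂ H (LinearMap.adjoint (F k τ) ∘ₗ F k τ)).re)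

/-- the guarded composition `□ᵢ |i⟩ → Fᵢ` of operator-valued functions, evaluated at
`⊕ᵢ δᵢ`. -/
def guardedComp (F : ∀ k, Δ k → (H →ₗ[ℂ] H)) (δ : ∀ k, Δ k) :
    TensorSp n H →ₗ[ℂ] TensorSp n H where
  toFun x := WithLp.toLp 2 (fun i => (∏ k ∈ Finset.univ.erase i, lam F k (δ k)) • F i (δ i) (x i))
  map_add' x y := by ext i; simp [map_add, smul_add]
  map_smul' c x := by
    ext i; simp [map_smul, smul_comm c]

end guarded

/-- partial trace over the coin space of an operator on `H_C ⊗ H`. -/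
def coinProj (i : Fin n) : TensorSp n H →ₗ[ℂ] H where
  toFun x := x i
  map_add' _ _ := rfl
  map_smul' _ _ := rfl

def coinIncl (i : Fin n) : H →ₗ[ℂ] TensorSp n H where
  toFun ψ := WithLp.toLp 2 (Pi.single i ψ)
  map_add' x y := by ext j; simp [Pi.single_apply]; split_ifs <;> simp
  map_smul' c x := by ext j; simp [Pi.single_apply]

def trCoin (A : TensorSp n H →ₗ[ℂ] TensorSp n H) : H →ₗ[ℂ] H :=
  ∑ i : Fin n, coinProj i ∘ₗ A ∘ₗ coinIncl i

/-- the outer product `|x⟩⟨y|`. -/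
def outer {E : Type*} [NormedAddCommGroup E] [InnerProductSpace ℂ E]
    (x y : E) : E →ₗ[ℂ] E :=
  ((innerSL ℂ y).toLinearMap).smulRight x




-- ===== auxiliary lemmas =====

lemma outer_apply' {E : Type*} [NormedAddCommGroup E] [InnerProductSpace ℂ E]
    (x y z : E) : outer x y z = ⟪y, z⟫_ℂ • x := rfl

lemma coinIncl_apply' (i : Fin n) (v : H) (j : Fin n) : coinIncl i v j = (Pi.single i v : Fin n → H) j := rfl

lemma coinProj_apply' (i : Fin n) (x : TensorSp n H) : coinProj i x = x i := rfl

lemma pureTensor_apply' (c : EuclideanSpace ℂ (Fin n)) (ψ : H) (i : Fin n) :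
    pureTensor c ψ i = c i • ψ := rfl

section aux
variable [FiniteDimensional ℂ H]

lemma trace_adjoint_comp_re_nonneg (f : H →ₗ[ℂ] H) :
    0 ≤ (LinearMap.trace ℂ H (LinearMap.adjoint f ∘ₗ f)).re := by
  classical
  let b := stdOrthonormalBasis ℂ H
  rw [LinearMap.trace_eq_matrix_trace ℂ b.toBasis, Matrix.trace]
  have : ∀ i, (LinearMap.toMatrix b.toBasis b.toBasis (LinearMap.adjoint f ∘ₗ f)).diag i
      = ⟪b i, LinearMap.adjoint f (f (b i))⟫_ℂ := by
    intro i
    simp [Matrix.diag, LinearMap.toMatrix_apply, OrthonormalBasis.coe_toBasis,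
      ← b.repr_apply_apply, OrthonormalBasis.coe_toBasis_repr_apply]
  rw [Complex.re_sum]
  refine Finset.sum_nonneg fun i _ => ?_
  rw [this i, LinearMap.adjoint_inner_right]
  simpa using inner_self_nonneg (𝕜 := ℂ) (x := f (b i))

variable {Δ : Fin n → Type*} [∀ k, Fintype (Δ k)]

lemma lam_adjoint (E : ∀ k, Δ k → (H →ₗ[ℂ] H)) (k : Fin n) (d : Δ k) :
    lam (fun k d => LinearMap.adjoint (E k d)) k d = lam E k d := by
  have key : ∀ f : H →ₗ[ℂ] H,
      LinearMap.trace ℂ H (LinearMap.adjoint (LinearMap.adjoint f) ∘ₗ LinearMap.adjoint f)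
        = LinearMap.trace ℂ H (LinearMap.adjoint f ∘ₗ f) := fun f => by
    rw [LinearMap.adjoint_adjoint, ← Module.End.mul_eq_comp, LinearMap.trace_mul_comm,
      Module.End.mul_eq_comp]
  unfold lam
  simp only [key]

lemma guardedComp_apply (E : ∀ k, Δ k → (H →ₗ[ℂ] H)) (δ : ∀ k, Δ k)
    (x : TensorSp n H) (i : Fin n) :
    guardedComp E δ x i = (∏ k ∈ Finset.univ.erase i, lam E k (δ k)) • E i (δ i) (x i) := rfl

lemma adjoint_guardedComp (E : ∀ k, Δ k → (H →ₗ[ℂ] H)) (δ : ∀ k, Δ k) :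
    LinearMap.adjoint (guardedComp E δ)
      = guardedComp (fun k d => LinearMap.adjoint (E k d)) δ := by
  symm
  rw [LinearMap.eq_adjoint_iff]
  intro x y
  rw [PiLp.inner_apply, PiLp.inner_apply]
  refine Finset.sum_congr rfl fun i _ => ?_
  rw [guardedComp_apply, guardedComp_apply]
  simp only [lam_adjoint, RCLike.real_smul_eq_coe_smul (K := ℂ), inner_smul_left,
    inner_smul_right, LinearMap.adjoint_inner_left]
  rw [RCLike.conj_ofReal]

lemma sum_lam_sq (E : ∀ k, Δ k → (H →ₗ[ℂ] H))
    (hfull : ∀ k, ∑ δ : Δ k, LinearMap.adjoint (E k δ) ∘ₗ E k δ = LinearMap.id)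
    (hH : Nontrivial H) (k : Fin n) : ∑ d : Δ k, (lam E k d) ^ 2 = 1 := by
  set t : Δ k → ℝ := fun d => (LinearMap.trace ℂ H (LinearMap.adjoint (E k d) ∘ₗ E k d)).re
    with ht
  have hS : ∑ d, t d = (Module.finrank ℂ H : ℝ) := by
    rw [← Complex.re_sum, ← map_sum, hfull k, LinearMap.trace_id]
    simp
  have hSpos : 0 < ∑ d, t d := by
    rw [hS]; exact_mod_cast Module.finrank_pos
  have : ∀ d, lam E k d ^ 2 = t d / ∑ τ, t τ := fun d =>
    Real.sq_sqrt (div_nonneg (trace_adjoint_comp_re_nonneg _) hSpos.le)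
  rw [Finset.sum_congr rfl fun d _ => this d, ← Finset.sum_div, div_self hSpos.ne']

end aux

lemma sum_prod_erase_smul {Δ : Fin n → Type*} [∀ k, Fintype (Δ k)] {M : Type*}
    [AddCommGroup M] [Module ℝ M] (g : ∀ k, Δ k → ℝ) (hg : ∀ k, ∑ d, g k d = 1)
    (i : Fin n) (T : Δ i → M) :
    ∑ δ : (∀ k, Δ k), (∏ k ∈ Finset.univ.erase i, g k (δ k)) • T (δ i) = ∑ d, T d := by
  classical
  have step : ∀ δ : (∀ k, Δ k), (∏ k ∈ Finset.univ.erase i, g k (δ k)) • T (δ i)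
      = ∑ d : Δ i, (∏ k, Function.update g i (fun x => if x = d then (1:ℝ) else 0) k (δ k))
          • T d := by
    intro δ
    have hprod : ∀ d : Δ i, (∏ k, Function.update g i
        (fun x => if x = d then (1:ℝ) else 0) k (δ k))
        = (if δ i = d then (1:ℝ) else 0) * ∏ k ∈ Finset.univ.erase i, g k (δ k) := by
      intro d
      rw [← Finset.mul_prod_erase Finset.univ _ (Finset.mem_univ i)]
      congr 1
      · simp [Function.update_self]
      · exact Finset.prod_congr rfl fun k hk =>
          congrFun (Function.update_of_ne (Finset.ne_of_mem_erase hk) _ _) _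
    simp only [hprod, ite_mul, one_mul, zero_mul, ite_smul, zero_smul,
      Finset.sum_ite_eq, Finset.mem_univ, if_true]
  rw [Finset.sum_congr rfl fun δ _ => step δ, Finset.sum_comm]
  refine Finset.sum_congr rfl fun d _ => ?_
  rw [← Finset.sum_smul, ← Fintype.prod_sum]
  have : ∀ k, (∑ x : Δ k, Function.update g i (fun x => if x = d then (1:ℝ) else 0) k x) = 1 := by
    intro k
    by_cases hk : k = i
    · subst hk; simp [Function.update_self]
    · simp [Function.update_of_ne hk, hg k]
  rw [Finset.prod_congr rfl fun k _ => this k]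
  simp

/-- tracing out the coin after the guarded composition of full Kraus
families, applied to the pure state `|φ⟩⊗|ψ⟩` with `|φ⟩ = ∑ᵢ αᵢ|i⟩`, yields the
probabilistic mixture `∑ᵢ |αᵢ|² · Eᵢ(|ψ⟩⟨ψ|)`. -/
theorem trCoin_guardedComp_pure {n : ℕ} {H : Type*} [NormedAddCommGroup H]
    [InnerProductSpace ℂ H] [FiniteDimensional ℂ H]
    {Δ : Fin n → Type*} [∀ k, Fintype (Δ k)] (E : ∀ k, Δ k → (H →ₗ[ℂ] H))
    (hfull : ∀ k, ∑ δ : Δ k, LinearMap.adjoint (E k δ) ∘ₗ E k δ = LinearMap.id)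
    (α : EuclideanSpace ℂ (Fin n)) (hα : ‖α‖ = 1) (ψ : H) (hψ : ‖ψ‖ = 1) :
    trCoin (∑ δ : (∀ k, Δ k),
        guardedComp E δ ∘ₗ outer (pureTensor α ψ) (pureTensor α ψ) ∘ₗ
          LinearMap.adjoint (guardedComp E δ))
      = ∑ i : Fin n, (↑(‖α i‖ ^ 2) : ℂ) •
          (∑ δi : Δ i, E i δi ∘ₗ outer ψ ψ ∘ₗ LinearMap.adjoint (E i δi)) := by
  classical
  have hH : Nontrivial H := by
    refine ⟨⟨ψ, 0, fun hc => ?_⟩⟩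
    rw [hc, norm_zero] at hψ; norm_num at hψ
  ext h
  set Φ := pureTensor α ψ with hΦ
  have key : ∀ (i : Fin n) (δ : ∀ k, Δ k),
      coinProj i ((guardedComp E δ ∘ₗ outer Φ Φ ∘ₗ LinearMap.adjoint (guardedComp E δ))
        (coinIncl i h))
      = (∏ k ∈ Finset.univ.erase i, (lam E k (δ k)) ^ 2) •
          ((↑(‖α i‖ ^ 2) : ℂ) •
            ((E i (δ i) ∘ₗ outer ψ ψ ∘ₗ LinearMap.adjoint (E i (δ i))) h)) := by
    intro i δ
    set c : ℝ := ∏ k ∈ Finset.univ.erase i, lam E k (δ k) with hc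
    have s1 : LinearMap.adjoint (guardedComp E δ) (coinIncl i h)
        = coinIncl i ((c : ℂ) • LinearMap.adjoint (E i (δ i)) h) := by
      rw [adjoint_guardedComp]
      ext j
      rw [guardedComp_apply, coinIncl_apply', coinIncl_apply']
      by_cases hj : j = i
      · subst hj
        simp only [Pi.single_eq_same, lam_adjoint, ← hc,
          RCLike.real_smul_eq_coe_smul (K := ℂ)]
        norm_cast
      · rw [Pi.single_eq_of_ne hj, Pi.single_eq_of_ne hj, map_zero, smul_zero]
    have s2 : ∀ v : H, outer Φ Φ (coinIncl i v)
        = ((starRingEnd ℂ) (α i) * ⟪ψ, v⟫_ℂ) • Φ := by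
      intro v
      rw [outer_apply']
      congr 1
      rw [PiLp.inner_apply]
      rw [Finset.sum_eq_single i (fun j _ hj => by
        rw [coinIncl_apply', Pi.single_eq_of_ne hj, inner_zero_right]) (fun hi => absurd (Finset.mem_univ i) hi)]
      rw [coinIncl_apply', Pi.single_eq_same, hΦ, pureTensor_apply', inner_smul_left]
    have s3 : ∀ s : ℂ, coinProj i (guardedComp E δ (s • Φ)) = s • ((c:ℂ) • (α i • E i (δ i) ψ)) := by
      intro s
      show (∏ k ∈ Finset.univ.erase i, lam E k (δ k)) • E i (δ i) ((s • Φ) i) = _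
      have : (s • Φ) i = s • (α i • ψ) := rfl
      rw [this, map_smul, map_smul, ← hc, RCLike.real_smul_eq_coe_smul (K := ℂ)]
      exact smul_comm _ _ _
    rw [LinearMap.comp_apply, LinearMap.comp_apply, s1, s2, s3]
    have hip : ⟪ψ, (c : ℂ) • LinearMap.adjoint (E i (δ i)) h⟫_ℂ
        = (c : ℂ) * ⟪ψ, LinearMap.adjoint (E i (δ i)) h⟫_ℂ := inner_smul_right _ _ _
    rw [hip]
    have hrhs : ((E i (δ i) ∘ₗ outer ψ ψ ∘ₗ LinearMap.adjoint (E i (δ i))) h)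
        = ⟪ψ, LinearMap.adjoint (E i (δ i)) h⟫_ℂ • E i (δ i) ψ := by
      simp [outer, LinearMap.comp_apply]
    rw [hrhs, Finset.prod_pow, ← hc, RCLike.real_smul_eq_coe_smul (K := ℂ)]
    simp only [smul_smul]
    congr 1
    have hconj : ((‖α i‖ ^ 2 : ℝ) : ℂ) = (starRingEnd ℂ) (α i) * α i := by
      rw [RCLike.conj_mul]; norm_cast
    rw [hconj]
    have hcoe : ∀ r : ℝ, (RCLike.ofReal r : ℂ) = Complex.ofReal r := fun _ => rfl
    simp only [hcoe]
    push_cast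
    ring
  -- assemble
  have lhs_eq : trCoin (∑ δ : (∀ k, Δ k),
        guardedComp E δ ∘ₗ outer Φ Φ ∘ₗ LinearMap.adjoint (guardedComp E δ)) h
      = ∑ i : Fin n, ∑ δ : (∀ k, Δ k),
          coinProj i ((guardedComp E δ ∘ₗ outer Φ Φ ∘ₗ LinearMap.adjoint (guardedComp E δ))
            (coinIncl i h)) := by
    rw [trCoin]
    simp only [LinearMap.sum_apply, LinearMap.comp_apply, map_sum]
  rw [lhs_eq]
  rw [Finset.sum_congr rfl fun i _ => Finset.sum_congr rfl fun δ _ => key i δ]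
  simp only [LinearMap.sum_apply, LinearMap.smul_apply]
  refine Finset.sum_congr rfl fun i _ => ?_
  rw [sum_prod_erase_smul (fun k d => (lam E k d) ^ 2) (sum_lam_sq E hfull hH) i
    (fun d => (↑(‖α i‖ ^ 2) : ℂ) • (E i d ∘ₗ outer ψ ψ ∘ₗ LinearMap.adjoint (E i d)) h)]
  rw [Finset.smul_sum]
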